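/- Let g : [0,∞) → ℂ be bounded and continuous, and suppose its Laplace transform G(λ) = ∫_0^∞ e^{-λt} g(t) dt vanishes for all λ with Re λ > 0. Then g ≡ 0; in particular g(0) = 0. -/

import Mathlib

open MeasureTheory

/-- Injectivity of the Laplace transform on bounded continuous functions on `[0,∞)`:
if all Laplace transforms vanish on the right half-plane then the function is zero. -/
theorem stmt1 (g : ℝ → ℂ) (C : ℝ)
    (hgc : ContinuousOn g (Set.Ici 0))
    (hgb : ∀ t : ℝ, 0 ≤ t → ‖g t‖ ≤ C)
    (hG : ∀ l : ℂ, 0 < l.re →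
      (∫ t in Set.Ioi (0:ℝ), Complex.exp (-l * t) * g t) = 0) :
    (∀ t : ℝ, 0 ≤ t → g t = 0) ∧ g 0 = 0 := by
  set h : ℝ → ℂ := fun t => Complex.exp (-t) * g t with hh_def
  set f : ℝ → ℂ := Set.indicator (Set.Ici 0) h with hf_def
  have hcont : ContinuousOn h (Set.Ici 0) :=
    (Complex.continuous_exp.comp (Complex.continuous_ofReal.neg)).continuousOn.mul hgc
  -- integrability of f
  have hint : Integrable f volume := by
    rw [hf_def, integrable_indicator_iff measurableSet_Ici]
    have hb : ∀ t ∈ Set.Ici (0:ℝ), ‖h t‖ ≤ C * Real.exp (-t) := by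
      intro t ht
      rw [hh_def]
      simp only [norm_mul, Complex.norm_exp, Complex.neg_re,
        Complex.ofReal_re]
      rw [mul_comm]
      exact mul_le_mul_of_nonneg_right (hgb t ht) (Real.exp_pos _).le
    have hintexp : IntegrableOn (fun t : ℝ => C * Real.exp (-t)) (Set.Ici 0) volume := by
      have : IntegrableOn (fun t : ℝ => Real.exp (-t)) (Set.Ici 0) volume := by
        rw [integrableOn_Ici_iff_integrableOn_Ioi]
        simpa using exp_neg_integrableOn_Ioi 0 one_pos
      exact this.const_mul C
    exact Integrable.mono' hintexp (hcont.aestronglyMeasurable measurableSet_Ici)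
      ((ae_restrict_iff' measurableSet_Ici).2 (Filter.Eventually.of_forall hb))
  -- Fourier transform of f vanishes
  have hFf : FourierTransform.fourier f = 0 := by
    funext ξ
    rw [Real.fourier_real_eq_integral_exp_smul]
    have key : (fun v : ℝ => Complex.exp (↑(-2 * Real.pi * v * ξ) * Complex.I) • f v)
        = Set.indicator (Set.Ici 0)
          (fun v : ℝ => Complex.exp (-(1 + 2 * Real.pi * ξ * Complex.I) * v) * g v) := by
      funext v
      by_cases hv : v ∈ Set.Ici (0:ℝ)
      · rw [hf_def, Set.indicator_of_mem hv, Set.indicator_of_mem hv, hh_def]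
        simp only [smul_eq_mul, ← mul_assoc, ← Complex.exp_add]
        congr 2
        push_cast
        ring
      · rw [hf_def, Set.indicator_of_notMem hv, Set.indicator_of_notMem hv, smul_zero]
    simp only [Pi.zero_apply]
    rw [key, integral_indicator measurableSet_Ici, integral_Ici_eq_integral_Ioi]
    have hre : ((1 : ℂ) + 2 * Real.pi * ξ * Complex.I).re = 1 := by simp
    exact hG (1 + 2 * Real.pi * ξ * Complex.I) (by rw [hre]; norm_num)
  have hFint : Integrable (FourierTransform.fourier f) volume := by
    rw [hFf]; exact integrable_zero _ _ _
  -- vanishing on (0, ∞) via Fourier inversion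
  have hpos : ∀ v : ℝ, 0 < v → g v = 0 := by
    intro v hv
    have hCA : ContinuousAt f v := by
      have hmem : Set.Ici (0:ℝ) ∈ nhds v := Ici_mem_nhds hv
      have : ContinuousAt h v := hcont.continuousAt hmem
      exact this.congr (Filter.eventuallyEq_of_mem hmem
        (fun x hx => (Set.indicator_of_mem hx h).symm))
    have hinv := hint.fourierInv_fourier_eq hFint hCA
    rw [hFf] at hinv
    have hzero : FourierTransformInv.fourierInv (0 : ℝ → ℂ) v = 0 := by
      rw [Real.fourierInv_eq]
      simp
    rw [hzero] at hinv
    have hfv : f v = 0 := hinv.symm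
    rw [hf_def, Set.indicator_of_mem (Set.mem_Ici.2 hv.le), hh_def] at hfv
    rcases mul_eq_zero.1 hfv with h1 | h2
    · exact absurd h1 (Complex.exp_ne_zero _)
    · exact h2
  -- value at 0 by continuity
  have h0 : g 0 = 0 := by
    have hne : (nhdsWithin (0:ℝ) (Set.Ioi 0)).NeBot := nhdsGT_neBot 0
    have ht1 : Filter.Tendsto g (nhdsWithin 0 (Set.Ioi 0)) (nhds (g 0)) :=
      ((hgc 0 Set.self_mem_Ici).mono_left (nhdsWithin_mono _ Set.Ioi_subset_Ici_self))
    have ht2 : Filter.Tendsto g (nhdsWithin 0 (Set.Ioi 0)) (nhds 0) := by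
      refine Filter.Tendsto.congr' ?_ tendsto_const_nhds
      exact Filter.eventuallyEq_of_mem self_mem_nhdsWithin
        (fun x hx => (hpos x hx).symm)
    exact tendsto_nhds_unique ht1 ht2
  refine ⟨fun t ht => ?_, h0⟩
  rcases eq_or_lt_of_le ht with rfl | hlt
  · exact h0
  · exact hpos t hlt
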